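/- Let 𝔖 be a translative cofinite G-semimatroid. (a) If x₀∈X∈𝒞 and rk(X)=rk(X∖{x₀})+1, then Y∪{g(x₀)}∈𝒞 for every g∈G and every Y∈𝒞 with Y̲=(X∖{x₀})̲. (b) If a₀∈A∈𝒞̲ and rk̲(A)=rk̲(A∖{a₀})+1, then the map w: 𝒞_A→𝒞_{A∖{a₀}} sending X to the set obtained from X by removing its (unique) element lying in the orbit a₀ is surjective, the induced map on G-orbits is surjective, and m_𝔖(A)≥m_𝔖(A∖{a₀}). (c) If a₀∈A∈𝒞̲ and rk̲(A)=rk̲(A∖{a₀}), then the map w is injective and m_𝔖(A)≤m_𝔖(A∖{a₀}). -/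
import Mathlib


open scoped Classical Pointwise


/-- A finitary semimatroid on the ground set `S`: a nonempty, finite-dimensional
simplicial complex `C` of finite subsets of `S` (containing all singletons), together
with a rank function satisfying (R1)-(R3), (CR1), (CR2). -/
structure FinSemimatroid (S : Type*) [DecidableEq S] where
  C : Set (Finset S)
  rk : Finset S → ℕ
  nonempty : C.Nonempty
  downClosed : ∀ ⦃X Y : Finset S⦄, X ∈ C → Y ⊆ X → Y ∈ C
  singleton_mem : ∀ x : S, ({x} : Finset S) ∈ C
  finDim : ∃ d : ℕ, ∀ X ∈ C, X.card ≤ d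
  r1 : ∀ X ∈ C, rk X ≤ X.card
  r2 : ∀ ⦃X Y : Finset S⦄, X ∈ C → Y ∈ C → X ⊆ Y → rk X ≤ rk Y
  r3 : ∀ ⦃X Y : Finset S⦄, X ∈ C → Y ∈ C → X ∪ Y ∈ C →
    rk (X ∪ Y) + rk (X ∩ Y) ≤ rk X + rk Y
  cr1 : ∀ ⦃X Y : Finset S⦄, X ∈ C → Y ∈ C → rk X = rk (X ∩ Y) → X ∪ Y ∈ C
  cr2 : ∀ ⦃X Y : Finset S⦄, X ∈ C → Y ∈ C → rk X < rk Y →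
    ∃ y ∈ Y, y ∉ X ∧ insert y X ∈ C

namespace FinSemimatroid

variable {S : Type*} [DecidableEq S]

/-- The closure of a central set. -/
def cl (M : FinSemimatroid S) (X : Finset S) : Set S :=
  {y : S | insert y X ∈ M.C ∧ M.rk (insert y X) = M.rk X}

/-- A flat is a closed central set. -/
def IsFlat (M : FinSemimatroid S) (X : Finset S) : Prop :=
  X ∈ M.C ∧ M.cl X = (X : Set S)

/-- The poset of flats, ordered by inclusion. -/
abbrev Flats (M : FinSemimatroid S) : Type _ := {X : Finset S // M.IsFlat X}

/-- A simple finitary semimatroid. -/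
def Simple (M : FinSemimatroid S) : Prop :=
  (∀ x : S, M.rk {x} = 1) ∧
    ∀ x y : S, x ≠ y → ({x, y} : Finset S) ∈ M.C → M.rk {x, y} = 2

end FinSemimatroid

/-- A poset is chain-finite if all its chains are finite. -/
def ChainFinite (L : Type*) [PartialOrder L] : Prop :=
  ∀ c : Set L, IsChain (· ≤ ·) c → c.Finite

/-- An atom of a bounded-below poset: an element covering the minimum. -/
def PosetAtom {L : Type*} [PartialOrder L] (a : L) : Prop :=
  ∃ bot : L, IsBot bot ∧ bot ⋖ a

/-- `L` (with rank function `rk`) is a finite geometric lattice (finite, bounded below,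
a lattice, ranked by `rk`, atomic and semimodular) with at most `N` atoms. -/
def IsFinGeomLatticeAtMost (L : Type*) [PartialOrder L] (rk : L → ℕ) (N : ℕ) : Prop :=
  Finite L ∧
    ∃ bot : L, IsBot bot ∧
      (∀ x y : L, ∃ m : L, IsGLB {x, y} m) ∧
      (∀ x y : L, ∃ j : L, IsLUB {x, y} j) ∧
      (∀ x y : L, x ⋖ y → rk y = rk x + 1) ∧
      (∀ x : L, ∃ A : Set L, (∀ a ∈ A, bot ⋖ a) ∧ IsLUB A x) ∧
      (∀ x y m j : L, IsGLB {x, y} m → IsLUB {x, y} j → rk j + rk m ≤ rk x + rk y) ∧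
      Nat.card {a : L | bot ⋖ a} ≤ N
/-- A `G`-semimatroid: an action of `G` on a finitary semimatroid, preserving
centrality and rank. -/
structure GSemimatroid (G S : Type*) [Group G] [MulAction G S] [DecidableEq S]
    extends FinSemimatroid S where
  smul_mem : ∀ (g : G) ⦃X : Finset S⦄, X ∈ C → X.image (g • ·) ∈ C
  rk_smul : ∀ (g : G) ⦃X : Finset S⦄, X ∈ C → rk (X.image (g • ·)) = rk X

namespace GSemimatroid

variable {G S : Type*} [Group G] [MulAction G S] [DecidableEq S]

/-- The set of orbits `E_𝔖 = S/G`. -/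
abbrev E (G S : Type*) [Group G] [MulAction G S] : Type _ :=
  Quotient (MulAction.orbitRel G S)

/-- The orbit of a point. -/
def orbOf (G : Type*) {S : Type*} [Group G] [MulAction G S] (x : S) : E G S :=
  Quotient.mk (MulAction.orbitRel G S) x

/-- `X̲`: the set of orbits met by `X`. -/
def under (G : Type*) {S : Type*} [Group G] [MulAction G S] (X : Finset S) :
    Set (E G S) :=
  orbOf G '' (X : Set S)

variable (M : GSemimatroid G S)

/-- `𝒞̲ = {X̲ : X ∈ 𝒞}`. -/
def CQ : Set (Set (E G S)) := {A | ∃ X ∈ M.C, under G X = A}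

/-- `rk̲ A = max { rk X : X ∈ 𝒞, X̲ ⊆ A }`. -/
noncomputable def rkQ (A : Set (E G S)) : ℕ :=
  sSup {n : ℕ | ∃ X ∈ M.C, under G X ⊆ A ∧ M.rk X = n}

/-- `𝒞_A`: the central sets lying over `A`. -/
def CA (A : Set (E G S)) : Set (Finset S) := {X | X ∈ M.C ∧ under G X = A}

/-- The type of central sets. -/
abbrev Cen : Type _ := {X : Finset S // X ∈ M.C}

/-- The `G`-orbit relation on central sets. -/
def cenRel (X Y : M.Cen) : Prop := ∃ g : G, X.1.image (g • ·) = Y.1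

/-- The set `𝒞/G` of orbits of central sets. -/
def COrb : Type _ := Quot M.cenRel

/-- The action is cofinite if `𝒞/G` is finite. -/
def Cofinite : Prop := Finite M.COrb

/-- `m_𝔖(A) = |𝒞_A / G|`. -/
noncomputable def m (A : Set (E G S)) : ℕ :=
  Nat.card {O : M.COrb // ∃ X : M.Cen, under G X.1 = A ∧ Quot.mk M.cenRel X = O}

def WeaklyTranslative : Prop :=
  ∀ (g : G) (x : S), ({x, g • x} : Finset S) ∈ M.C →
    M.rk {x, g • x} = M.rk ({x} : Finset S)

def Translative : Prop :=
  ∀ (g : G) (x : S), ({x, g • x} : Finset S) ∈ M.C → g • x = x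

def Centered : Prop := ∃ X ∈ M.C, under G X = (Set.univ : Set (E G S))

def Normal (_M : GSemimatroid G S) : Prop :=
  ∀ x : S, Subgroup.Normal (MulAction.stabilizer G x)

def AlmostArithmetic : Prop := M.Translative ∧ M.Normal

/-- The action is arithmetic: almost-arithmetic, and for every central `X` the set
`W(X) ⊆ Γ^X` is a subgroup (expressed via representative families of group elements). -/
def Arithmetic : Prop :=
  M.AlmostArithmetic ∧
    ∀ ⦃X : Finset S⦄, X ∈ M.C → ∀ γ δ : S → G,
      X.image (fun x => γ x • x) ∈ M.C → X.image (fun x => δ x • x) ∈ M.C →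
        X.image (fun x => (γ x * δ x) • x) ∈ M.C ∧
          X.image (fun x => (γ x)⁻¹ • x) ∈ M.C

/-- Remove from `X` all elements of the orbit `a₀`. -/
noncomputable def strip (a₀ : E G S) (X : Finset S) : Finset S :=
  X.filter (fun x => orbOf G x ≠ a₀)

/-- The Tutte polynomial of a `G`-semimatroid, as a function `ℤ × ℤ → ℤ`. -/
noncomputable def Tutte (x y : ℤ) : ℤ :=
  ∑ᶠ A ∈ M.CQ, (M.m A : ℤ) * (x - 1) ^ (M.rkQ Set.univ - M.rkQ A) *
    (y - 1) ^ (Nat.card A - M.rkQ A)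

end GSemimatroid

open GSemimatroid

set_option linter.unusedSectionVars false
section AuxTSM

variable {G S : Type*} [Group G] [MulAction G S] [DecidableEq S] (M : GSemimatroid G S)

lemma orbOf_smul_tsm (g : G) (x : S) : orbOf G (g • x) = orbOf G x :=
  Quotient.sound ⟨g, rfl⟩

lemma mem_under_tsm {X : Finset S} {a : E G S} :
    a ∈ under G X ↔ ∃ x ∈ X, orbOf G x = a := by
  simp only [under, Set.mem_image, Finset.mem_coe]

lemma under_image_tsm (g : G) (X : Finset S) :
    under G (X.image (g • ·)) = under G X := by
  ext a
  simp only [mem_under_tsm, Finset.mem_image]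
  constructor
  · rintro ⟨x, ⟨y, hy, rfl⟩, rfl⟩
    exact ⟨y, hy, (orbOf_smul_tsm g y).symm⟩
  · rintro ⟨x, hx, rfl⟩
    exact ⟨g • x, ⟨x, hx, rfl⟩, orbOf_smul_tsm g x⟩

lemma eq_of_orb_tsm (htr : M.Translative) {X : Finset S} (hX : X ∈ M.C) {x y : S}
    (hx : x ∈ X) (hy : y ∈ X) (h : orbOf G x = orbOf G y) : x = y := by
  obtain ⟨g, hg⟩ : ∃ g : G, g • y = x := Quotient.exact h
  have hpair : ({y, g • y} : Finset S) ∈ M.C := by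
    refine M.downClosed hX ?_
    intro z hz
    rcases Finset.mem_insert.mp hz with rfl | hz
    · exact hy
    · rw [Finset.mem_singleton.mp hz, hg]; exact hx
  have := htr g y hpair
  rw [this] at hg
  exact hg.symm

lemma rk_le_of_under_subset_tsm (htr : M.Translative) {W Z : Finset S}
    (hW : W ∈ M.C) (hZ : Z ∈ M.C) (h : under G W ⊆ under G Z) :
    M.rk W ≤ M.rk Z := by
  by_contra hlt
  push_neg at hlt
  obtain ⟨y, hyW, hyZ, hins⟩ := M.cr2 hZ hW hlt
  have hmem : orbOf G y ∈ under G Z := h (mem_under_tsm.mpr ⟨y, hyW, rfl⟩)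
  obtain ⟨z, hzZ, hz⟩ := mem_under_tsm.mp hmem
  have : z = y := eq_of_orb_tsm M htr hins (Finset.mem_insert_of_mem hzZ)
    (Finset.mem_insert_self _ _) hz
  exact hyZ (this ▸ hzZ)

lemma rkQ_eq_tsm (htr : M.Translative) {Z : Finset S} (hZ : Z ∈ M.C) :
    M.rkQ (under G Z) = M.rk Z := by
  obtain ⟨d, hd⟩ := M.finDim
  have hbdd : BddAbove {n : ℕ | ∃ X ∈ M.C, under G X ⊆ under G Z ∧ M.rk X = n} := by
    refine ⟨d, ?_⟩
    rintro n ⟨X, hX, -, rfl⟩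
    exact (M.r1 X hX).trans (hd X hX)
  refine le_antisymm ?_ ?_
  · refine csSup_le ⟨M.rk Z, Z, hZ, subset_rfl, rfl⟩ ?_
    rintro n ⟨X, hX, hsub, rfl⟩
    exact rk_le_of_under_subset_tsm M htr hX hZ hsub
  · exact le_csSup hbdd ⟨Z, hZ, subset_rfl, rfl⟩

lemma under_strip_tsm (a₀ : E G S) (X : Finset S) :
    under G (strip a₀ X) = under G X \ {a₀} := by
  ext a
  simp only [mem_under_tsm, strip, Finset.mem_filter, Set.mem_diff,
    Set.mem_singleton_iff]
  constructor
  · rintro ⟨x, ⟨hx, hne⟩, rfl⟩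
    exact ⟨⟨x, hx, rfl⟩, hne⟩
  · rintro ⟨⟨x, hx, rfl⟩, hne⟩
    exact ⟨x, ⟨hx, hne⟩, rfl⟩

lemma strip_eq_erase_tsm (htr : M.Translative) {X : Finset S} (hX : X ∈ M.C)
    {x₀ : S} (hx₀ : x₀ ∈ X) : strip (orbOf G x₀) X = X.erase x₀ := by
  ext x
  simp only [strip, Finset.mem_filter, Finset.mem_erase]
  constructor
  · rintro ⟨hx, hne⟩
    exact ⟨fun h => hne (h ▸ rfl), hx⟩
  · rintro ⟨hne, hx⟩
    exact ⟨hx, fun h => hne (eq_of_orb_tsm M htr hX hx hx₀ h)⟩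

lemma strip_image_tsm (a₀ : E G S) (g : G) (X : Finset S) :
    strip a₀ (X.image (g • ·)) = (strip a₀ X).image (g • ·) := by
  ext x
  simp only [strip, Finset.mem_filter, Finset.mem_image]
  constructor
  · rintro ⟨⟨y, hy, rfl⟩, hne⟩
    exact ⟨y, ⟨hy, by rwa [orbOf_smul_tsm] at hne⟩, rfl⟩
  · rintro ⟨y, ⟨hy, hne⟩, rfl⟩
    exact ⟨⟨y, hy, rfl⟩, by rwa [orbOf_smul_tsm]⟩

lemma cenRel_equiv_tsm : Equivalence M.cenRel := by
  have key : ∀ (h : G) (s : Finset S), (s.image (h • ·)).image (h⁻¹ • ·) = s := by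
    intro h s
    rw [Finset.image_image]
    simp [Function.comp_def]
  constructor
  · intro X
    exact ⟨1, by simp⟩
  · rintro ⟨X, hX⟩ ⟨Y, hY⟩ ⟨g, hg⟩
    refine ⟨g⁻¹, ?_⟩
    simp only at hg ⊢
    rw [← hg, key]
  · rintro ⟨X, hX⟩ ⟨Y, hY⟩ ⟨Z, hZ⟩ ⟨g, hg⟩ ⟨h, hh⟩
    refine ⟨h * g, ?_⟩
    simp only at hg hh ⊢
    rw [← hh, ← hg, Finset.image_image]
    simp [Function.comp_def, mul_smul]

lemma cenRel_of_quot_eq_tsm {X Y : M.Cen}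
    (h : Quot.mk M.cenRel X = Quot.mk M.cenRel Y) : M.cenRel X Y :=
  ((cenRel_equiv_tsm M).eqvGen_iff).mp (Quot.eqvGen_exact h)

lemma partA_tsm (htr : M.Translative) :
    ∀ (X : Finset S) (x₀ : S), x₀ ∈ X → X ∈ M.C →
      M.rk X = M.rk (X.erase x₀) + 1 →
      ∀ (g : G) (Y : Finset S), Y ∈ M.C → under G Y = under G (X.erase x₀) →
        insert (g • x₀) Y ∈ M.C := by
  intro X x₀ hx₀ hX hrk g Y hY hunder
  set X' := X.image (g • ·) with hX'def
  have hX'C : X' ∈ M.C := M.smul_mem g hX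
  have hx₀' : g • x₀ ∈ X' := Finset.mem_image_of_mem _ hx₀
  have herase : X'.erase (g • x₀) = (X.erase x₀).image (g • ·) :=
    (Finset.image_erase (MulAction.injective g) X x₀).symm
  have heraseC : X.erase x₀ ∈ M.C := M.downClosed hX (Finset.erase_subset _ _)
  have heraseC' : X'.erase (g • x₀) ∈ M.C := M.downClosed hX'C (Finset.erase_subset _ _)
  have hrk' : M.rk X' = M.rk (X'.erase (g • x₀)) + 1 := by
    rw [M.rk_smul g hX, herase, M.rk_smul g heraseC]; exact hrk
  have hunder' : under G Y = under G (X'.erase (g • x₀)) := by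
    rw [herase, under_image_tsm]; exact hunder
  have h1 : M.rk Y ≤ M.rk (X'.erase (g • x₀)) :=
    rk_le_of_under_subset_tsm M htr hY heraseC' (by rw [hunder'])
  have h2 : M.rk Y < M.rk X' := by omega
  obtain ⟨y, hyX', hyY, hins⟩ := M.cr2 hY hX'C h2
  by_cases hcase : y = g • x₀
  · rw [← hcase]; exact hins
  · exfalso
    have hyE : y ∈ X'.erase (g • x₀) := Finset.mem_erase.mpr ⟨hcase, hyX'⟩
    have : orbOf G y ∈ under G Y := by
      rw [hunder']; exact mem_under_tsm.mpr ⟨y, hyE, rfl⟩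
    obtain ⟨z, hzY, hzy⟩ := mem_under_tsm.mp this
    have : z = y := eq_of_orb_tsm M htr hins (Finset.mem_insert_of_mem hzY)
      (Finset.mem_insert_self _ _) hzy
    exact hyY (this ▸ hzY)

lemma partB_surj_tsm (htr : M.Translative) {A : Set (E G S)} {a₀ : E G S}
    (ha₀ : a₀ ∈ A) (hA : A ∈ M.CQ) (hrk : M.rkQ A = M.rkQ (A \ {a₀}) + 1) :
    ∀ Y ∈ M.CA (A \ {a₀}), ∃ X ∈ M.CA A, strip a₀ X = Y := by
  obtain ⟨Z, hZ, hZA⟩ := hA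
  rintro Y ⟨hYC, hYA⟩
  have ha₀Z : a₀ ∈ under G Z := by rw [hZA]; exact ha₀
  obtain ⟨z₀, hz₀Z, hz₀⟩ := mem_under_tsm.mp ha₀Z
  have hstripZ : strip a₀ Z = Z.erase z₀ := by
    rw [← hz₀]; exact strip_eq_erase_tsm M htr hZ hz₀Z
  have heraseC : Z.erase z₀ ∈ M.C := M.downClosed hZ (Finset.erase_subset _ _)
  have hunder_erase : under G (Z.erase z₀) = A \ {a₀} := by
    rw [← hstripZ, under_strip_tsm, hZA]
  have hrkZ : M.rkQ A = M.rk Z := by rw [← hZA, rkQ_eq_tsm M htr hZ]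
  have hrkE : M.rkQ (A \ {a₀}) = M.rk (Z.erase z₀) := by
    rw [← hunder_erase, rkQ_eq_tsm M htr heraseC]
  have hZerase : M.rk Z = M.rk (Z.erase z₀) + 1 := by omega
  have hins : insert z₀ Y ∈ M.C := by
    have := partA_tsm M htr Z z₀ hz₀Z hZ hZerase 1 Y hYC
      (by rw [hunder_erase]; exact hYA)
    simpa using this
  have hz₀Y : z₀ ∉ Y := by
    intro hmem
    have : orbOf G z₀ ∈ A \ {a₀} := by rw [← hYA]; exact mem_under_tsm.mpr ⟨z₀, hmem, rfl⟩
    exact this.2 hz₀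
  refine ⟨insert z₀ Y, ⟨hins, ?_⟩, ?_⟩
  · have : under G (insert z₀ Y) = insert (orbOf G z₀) (under G Y) := by
      simp only [under, Finset.coe_insert, Set.image_insert_eq]
    rw [this, hYA, hz₀, Set.insert_diff_singleton, Set.insert_eq_of_mem ha₀]
  · ext x
    simp only [strip, Finset.mem_filter, Finset.mem_insert]
    constructor
    · rintro ⟨rfl | hxY, hne⟩
      · exact absurd hz₀ hne
      · exact hxY
    · intro hxY
      have hne : orbOf G x ≠ a₀ := by
        have : orbOf G x ∈ A \ {a₀} := by
          rw [← hYA]; exact mem_under_tsm.mpr ⟨x, hxY, rfl⟩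
        exact this.2
      exact ⟨Or.inr hxY, hne⟩

lemma partC_inj_tsm (htr : M.Translative) {A : Set (E G S)} {a₀ : E G S}
    (ha₀ : a₀ ∈ A) (hrk : M.rkQ A = M.rkQ (A \ {a₀})) :
    ∀ X₁ ∈ M.CA A, ∀ X₂ ∈ M.CA A, strip a₀ X₁ = strip a₀ X₂ → X₁ = X₂ := by
  rintro X₁ ⟨hC₁, hA₁⟩ X₂ ⟨hC₂, hA₂⟩ hstrip
  obtain ⟨x₁, hx₁, ho₁⟩ := mem_under_tsm.mp (show a₀ ∈ under G X₁ by rw [hA₁]; exact ha₀)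
  obtain ⟨x₂, hx₂, ho₂⟩ := mem_under_tsm.mp (show a₀ ∈ under G X₂ by rw [hA₂]; exact ha₀)
  have hXeq : ∀ (X : Finset S), X ∈ M.C → ∀ x ∈ X, orbOf G x = a₀ →
      X = insert x (strip a₀ X) := by
    intro X hXC x hxX hox
    ext z
    simp only [Finset.mem_insert, strip, Finset.mem_filter]
    constructor
    · intro hz
      by_cases h : orbOf G z = a₀
      · exact Or.inl (eq_of_orb_tsm M htr hXC hz hxX (h.trans hox.symm))
      · exact Or.inr ⟨hz, h⟩
    · rintro (rfl | ⟨hz, -⟩)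
      exacts [hxX, hz]
  have hYC : strip a₀ X₁ ∈ M.C := M.downClosed hC₁ (Finset.filter_subset _ _)
  have hunderY : under G (strip a₀ X₁) = A \ {a₀} := by rw [under_strip_tsm, hA₁]
  have hrkY : M.rk (strip a₀ X₁) = M.rk X₁ := by
    have e1 : M.rk (strip a₀ X₁) = M.rkQ (A \ {a₀}) := by
      rw [← hunderY, rkQ_eq_tsm M htr hYC]
    have e2 : M.rk X₁ = M.rkQ A := by rw [← hA₁, rkQ_eq_tsm M htr hC₁]
    omega
  have hYsub : strip a₀ X₁ ⊆ X₁ ∩ X₂ := by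
    refine Finset.subset_inter (Finset.filter_subset _ _) ?_
    rw [hstrip]; exact Finset.filter_subset _ _
  have hintC : X₁ ∩ X₂ ∈ M.C := M.downClosed hC₁ Finset.inter_subset_left
  have hrkint : M.rk X₁ = M.rk (X₁ ∩ X₂) := by
    refine le_antisymm ?_ (M.r2 hintC hC₁ Finset.inter_subset_left)
    rw [← hrkY]; exact M.r2 hYC hintC hYsub
  have hunion : X₁ ∪ X₂ ∈ M.C := M.cr1 hC₁ hC₂ hrkint
  have hx12 : x₁ = x₂ := eq_of_orb_tsm M htr hunion (Finset.mem_union_left _ hx₁)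
    (Finset.mem_union_right _ hx₂) (ho₁.trans ho₂.symm)
  rw [hXeq X₁ hC₁ x₁ hx₁ ho₁, hXeq X₂ hC₂ x₂ hx₂ ho₂, hx12, hstrip]

/-- The strip map on central sets. -/
noncomputable def stripCen_tsm (a₀ : E G S) (X : M.Cen) : M.Cen :=
  ⟨strip a₀ X.1, M.downClosed X.2 (Finset.filter_subset _ _)⟩

lemma m_le_of_strip_surj_tsm (hcof : M.Cofinite) {A : Set (E G S)} {a₀ : E G S}
    (ha₀ : a₀ ∈ A)
    (hsurj : ∀ Y ∈ M.CA (A \ {a₀}), ∃ X ∈ M.CA A, strip a₀ X = Y) :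
    M.m (A \ {a₀}) ≤ M.m A := by
  haveI : Finite M.COrb := hcof
  rw [GSemimatroid.m, GSemimatroid.m]
  have key : ∀ X : M.Cen, under G X.1 = A →
      under G (stripCen_tsm M a₀ X).1 = A \ {a₀} := by
    intro X h
    show under G (strip a₀ X.1) = A \ {a₀}
    rw [under_strip_tsm, h]
  refine Nat.card_le_card_of_surjective
    (fun O : {O : M.COrb // ∃ X : M.Cen, under G X.1 = A ∧ Quot.mk M.cenRel X = O} =>
      (⟨Quot.mk M.cenRel (stripCen_tsm M a₀ O.2.choose),
        stripCen_tsm M a₀ O.2.choose, key _ O.2.choose_spec.1, rfl⟩ :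
        {O : M.COrb // ∃ X : M.Cen, under G X.1 = A \ {a₀} ∧ Quot.mk M.cenRel X = O}))
    ?_
  rintro ⟨O', hO'⟩
  set Y := hO'.choose with hYdef
  have hYspec := hO'.choose_spec
  obtain ⟨X, ⟨hXC, hXA⟩, hstrip⟩ := hsurj Y.1 ⟨Y.2, hYspec.1⟩
  refine ⟨⟨Quot.mk M.cenRel ⟨X, hXC⟩, ⟨X, hXC⟩, hXA, rfl⟩, ?_⟩
  apply Subtype.ext
  show Quot.mk M.cenRel (stripCen_tsm M a₀ _) = O'
  set O : {O : M.COrb // ∃ X : M.Cen, under G X.1 = A ∧ Quot.mk M.cenRel X = O} :=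
    ⟨Quot.mk M.cenRel ⟨X, hXC⟩, ⟨X, hXC⟩, hXA, rfl⟩ with hOdef
  have hq : Quot.mk M.cenRel O.2.choose = Quot.mk M.cenRel ⟨X, hXC⟩ :=
    O.2.choose_spec.2
  obtain ⟨g, hg⟩ := cenRel_of_quot_eq_tsm M hq
  have hrel : M.cenRel (stripCen_tsm M a₀ O.2.choose) Y := by
    refine ⟨g, ?_⟩
    show (strip a₀ O.2.choose.1).image (g • ·) = Y.1
    rw [← strip_image_tsm, hg]
    exact hstrip
  rw [Quot.sound hrel, hYspec.2]

lemma m_le_of_strip_inj_tsm (hcof : M.Cofinite) {A : Set (E G S)} {a₀ : E G S}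
    (ha₀ : a₀ ∈ A)
    (hinj : ∀ X₁ ∈ M.CA A, ∀ X₂ ∈ M.CA A, strip a₀ X₁ = strip a₀ X₂ → X₁ = X₂) :
    M.m A ≤ M.m (A \ {a₀}) := by
  haveI : Finite M.COrb := hcof
  rw [GSemimatroid.m, GSemimatroid.m]
  have key : ∀ X : M.Cen, under G X.1 = A →
      under G (stripCen_tsm M a₀ X).1 = A \ {a₀} := by
    intro X h
    show under G (strip a₀ X.1) = A \ {a₀}
    rw [under_strip_tsm, h]
  refine Nat.card_le_card_of_injective
    (fun O : {O : M.COrb // ∃ X : M.Cen, under G X.1 = A ∧ Quot.mk M.cenRel X = O} =>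
      (⟨Quot.mk M.cenRel (stripCen_tsm M a₀ O.2.choose),
        stripCen_tsm M a₀ O.2.choose, key _ O.2.choose_spec.1, rfl⟩ :
        {O : M.COrb // ∃ X : M.Cen, under G X.1 = A \ {a₀} ∧ Quot.mk M.cenRel X = O}))
    ?_
  intro O₁ O₂ hf
  have hf' : Quot.mk M.cenRel (stripCen_tsm M a₀ O₁.2.choose) =
      Quot.mk M.cenRel (stripCen_tsm M a₀ O₂.2.choose) := congrArg Subtype.val hf
  obtain ⟨g, hg⟩ := cenRel_of_quot_eq_tsm M hf'
  have hg' : (strip a₀ O₁.2.choose.1).image (g • ·) = strip a₀ O₂.2.choose.1 := hg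
  have hXg : (O₁.2.choose.1.image (g • ·)) ∈ M.CA A := by
    exact ⟨M.smul_mem g O₁.2.choose.2, by rw [under_image_tsm, O₁.2.choose_spec.1]⟩
  have hX₂ : O₂.2.choose.1 ∈ M.CA A := ⟨O₂.2.choose.2, O₂.2.choose_spec.1⟩
  have heq : O₁.2.choose.1.image (g • ·) = O₂.2.choose.1 := by
    refine hinj _ hXg _ hX₂ ?_
    rw [strip_image_tsm, hg']
  have hrel : M.cenRel O₁.2.choose O₂.2.choose := ⟨g, heq⟩
  apply Subtype.ext
  rw [← O₁.2.choose_spec.2, ← O₂.2.choose_spec.2, Quot.sound hrel]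

end AuxTSM

/-- For a translative cofinite `G`-semimatroid:
(a) if `rk X = rk (X \ {x₀}) + 1` then `Y ∪ {g x₀}` is central for every `g` and every
central `Y` with `Y̲ = (X \ {x₀})̲`;
(b) if `rk̲ A = rk̲ (A \ {a₀}) + 1` then the map removing the element of orbit `a₀` is
surjective `𝒞_A → 𝒞_{A∖a₀}`, induces a surjection on `G`-orbits, and
`m_𝔖(A) ≥ m_𝔖(A∖a₀)`;
(c) if `rk̲ A = rk̲ (A \ {a₀})` then that map is injective and `m_𝔖(A) ≤ m_𝔖(A∖a₀)`. -/
theorem translative_strip_maps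
    {G S : Type*} [Group G] [MulAction G S] [DecidableEq S]
    (M : GSemimatroid G S) (hcof : M.Cofinite) (htr : M.Translative) :
    (∀ (X : Finset S) (x₀ : S), x₀ ∈ X → X ∈ M.C →
      M.rk X = M.rk (X.erase x₀) + 1 →
      ∀ (g : G) (Y : Finset S), Y ∈ M.C → under G Y = under G (X.erase x₀) →
        insert (g • x₀) Y ∈ M.C) ∧
    (∀ (A : Set (E G S)) (a₀ : E G S), a₀ ∈ A → A ∈ M.CQ →
      M.rkQ A = M.rkQ (A \ {a₀}) + 1 →
      (∀ Y ∈ M.CA (A \ {a₀}), ∃ X ∈ M.CA A, strip a₀ X = Y) ∧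
      (∀ Y ∈ M.CA (A \ {a₀}), ∃ X ∈ M.CA A, ∃ g : G,
        (strip a₀ X).image (g • ·) = Y) ∧
      M.m (A \ {a₀}) ≤ M.m A) ∧
    (∀ (A : Set (E G S)) (a₀ : E G S), a₀ ∈ A → A ∈ M.CQ →
      M.rkQ A = M.rkQ (A \ {a₀}) →
      (∀ X₁ ∈ M.CA A, ∀ X₂ ∈ M.CA A, strip a₀ X₁ = strip a₀ X₂ → X₁ = X₂) ∧
      M.m A ≤ M.m (A \ {a₀})) := by
  refine ⟨partA_tsm M htr, ?_, ?_⟩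
  · intro A a₀ ha₀ hA hrk
    have hsurj := partB_surj_tsm M htr ha₀ hA hrk
    refine ⟨hsurj, ?_, m_le_of_strip_surj_tsm M hcof ha₀ hsurj⟩
    intro Y hY
    obtain ⟨X, hX, hs⟩ := hsurj Y hY
    exact ⟨X, hX, 1, by simpa using hs⟩
  · intro A a₀ ha₀ hA hrk
    have hinj := partC_inj_tsm M htr ha₀ hrk
    exact ⟨hinj, m_le_of_strip_inj_tsm M hcof ha₀ hinj⟩
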